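/- Assume the real constants B^{KK,αβ}_{K,γ} (α, β, γ = 0,…,3) satisfy the null condition B^{KK,αβ}_{K,γ} ξ_α ξ_β ξ_γ = 0 whenever ξ₀²/c_K² − ξ₁² − ξ₂² − ξ₃² = 0. Let c₀ = min{c_I/2 : I = 1,…,D}. Then there is a constant C such that for all smooth real-valued functions u^K, v^K, w^K on (an open set containing) {(t,x) : t ≥ 0, |x| ≥ c₀t/2} and all such (t,x): |B^{KK,αβ}_{K,γ} ∂_α u^K ∂_β v^K ∂_γ w^K| ≤ C ⟨t+|x|⟩^{−1} [ |Γ u^K| |∂ v^K| |∂ w^K| + |∂ u^K| |Γ v^K| |∂ w^K| + |∂ u^K| |∂ v^K| |Γ w^K| + ⟨c_K t − r⟩ |∂ u^K| |∂ v^K| |∂ w^K| ], where the sum over α, β, γ from 0 to 3 is implicit on the left. -/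

import Mathlib

noncomputable section

open MeasureTheory Real Set

abbrev E3 : Type := EuclideanSpace ℝ (Fin 3)

/-- Japanese bracket `⟨s⟩ = (1+s²)^{1/2}`. -/
def jb (s : ℝ) : ℝ := Real.sqrt (1 + s ^ 2)

/-- Time derivative `∂_t`. -/
def pdt (w : ℝ → E3 → ℝ) : ℝ → E3 → ℝ := fun t x => deriv (fun s => w s x) t

/-- Spatial partial derivative `∂_i`. -/
def pdx (i : Fin 3) (w : ℝ → E3 → ℝ) : ℝ → E3 → ℝ :=
  fun t x => fderiv ℝ (fun y => w t y) x (EuclideanSpace.single i 1)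

/-- Space-time derivative `∂_α`, with `α = 0` the time derivative. -/
def pd (α : Fin 4) : (ℝ → E3 → ℝ) → ℝ → E3 → ℝ :=
  if h : α = 0 then pdt else pdx (α.pred h)

/-- Radial derivative `∂_r`. -/
def pdr (w : ℝ → E3 → ℝ) : ℝ → E3 → ℝ :=
  fun t x => ∑ i : Fin 3, (x i / ‖x‖) * pdx i w t x

/-- Scaling vector field `L = t∂_t + r∂_r`. -/
def Lop (w : ℝ → E3 → ℝ) : ℝ → E3 → ℝ :=
  fun t x => t * pdt w t x + ∑ i : Fin 3, x i * pdx i w t x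

/-- Rotation vector fields `Ω_{ij} = x_i ∂_j - x_j ∂_i`. -/
def rot (i j : Fin 3) (w : ℝ → E3 → ℝ) : ℝ → E3 → ℝ :=
  fun t x => x i * pdx j w t x - x j * pdx i w t x

/-- The eight admissible vector fields `Γ = {L, Ω_{ij}, ∂_k}`. -/
def gam (k : Fin 8) : (ℝ → E3 → ℝ) → ℝ → E3 → ℝ :=
  if k = 0 then Lop else if k = 1 then rot 0 1 else if k = 2 then rot 0 2
  else if k = 3 then rot 1 2 else if k = 4 then pd 0 else if k = 5 then pd 1
  else if k = 6 then pd 2 else pd 3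

/-- Iterated application of a family of operators along a word. -/
def iterOp {m : ℕ} (F : Fin m → (ℝ → E3 → ℝ) → ℝ → E3 → ℝ) :
    ∀ {n : ℕ}, (Fin n → Fin m) → (ℝ → E3 → ℝ) → ℝ → E3 → ℝ
  | 0, _, w => w
  | _ + 1, μ, w => F (μ 0) (iterOp F (fun i => μ i.succ) w)

/-- `Γ^μ`. -/
def gamW {n : ℕ} (μ : Fin n → Fin 8) : (ℝ → E3 → ℝ) → ℝ → E3 → ℝ := iterOp gam μ

/-- `∂^μ`. -/
def pdW {n : ℕ} (μ : Fin n → Fin 4) : (ℝ → E3 → ℝ) → ℝ → E3 → ℝ := iterOp pd μ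

/-- `|∂w|`: pointwise size of the full space-time gradient. -/
def aGrad (w : ℝ → E3 → ℝ) (t : ℝ) (x : E3) : ℝ := ∑ α : Fin 4, |pd α w t x|

/-- `|∂²w|`. -/
def aGrad2 (w : ℝ → E3 → ℝ) (t : ℝ) (x : E3) : ℝ :=
  ∑ α : Fin 4, ∑ β : Fin 4, |pd α (pd β w) t x|

/-- `|Γw|`. -/
def aGam (w : ℝ → E3 → ℝ) (t : ℝ) (x : E3) : ℝ := ∑ k : Fin 8, |gam k w t x|

/-- `|∂Γw|`. -/
def aGradGam (w : ℝ → E3 → ℝ) (t : ℝ) (x : E3) : ℝ :=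
  ∑ α : Fin 4, ∑ k : Fin 8, |pd α (gam k w) t x|

/-- The d'Alembertian `∂_t² - c²Δ`. -/
def dAlembert (cs : ℝ) (w : ℝ → E3 → ℝ) : ℝ → E3 → ℝ :=
  fun t x => pdt (pdt w) t x - cs ^ 2 * ∑ i : Fin 3, pdx i (pdx i w) t x

/-- The perturbed d'Alembertian `(□_h u)^I`. -/
def boxH {D : ℕ} (c : Fin D → ℝ) (h : Fin D → Fin D → Fin 4 → Fin 4 → ℝ → E3 → ℝ)
    (u : Fin D → ℝ → E3 → ℝ) (I : Fin D) : ℝ → E3 → ℝ :=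
  fun t x => dAlembert (c I) (u I) t x
    + ∑ J, ∑ α, ∑ β, h I J α β t x * pd α (pd β (u J)) t x

/-- The commutator `[P, h^{IJ,γδ}∂_γ∂_δ]u` (the `I`-th component). -/
def commPH {D : ℕ} (P : (ℝ → E3 → ℝ) → ℝ → E3 → ℝ)
    (h : Fin D → Fin D → Fin 4 → Fin 4 → ℝ → E3 → ℝ)
    (u : Fin D → ℝ → E3 → ℝ) (I : Fin D) : ℝ → E3 → ℝ :=
  fun t x => ∑ J, ∑ γ, ∑ δ,
    (P (fun s y => h I J γ δ s y * pd γ (pd δ (u J)) s y) t x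
      - h I J γ δ t x * pd γ (pd δ (P (u J))) t x)

/-- `K` has boundary which is locally the sublevel set of a `C^ord` defining
function with nonvanishing gradient. -/
def HasSmoothBoundary (K : Set E3) (ord : ℕ∞) : Prop :=
  ∀ x ∈ frontier K, ∃ (U : Set E3) (f : E3 → ℝ), IsOpen U ∧ x ∈ U ∧
    ContDiff ℝ ord f ∧ (∀ y ∈ U, fderiv ℝ f y ≠ 0) ∧ K ∩ U = {y ∈ U | f y ≤ 0}

/-- Star-shaped with respect to the origin. -/
def StarShapedZero (K : Set E3) : Prop :=
  ∀ x ∈ K, ∀ s : ℝ, s ∈ Set.Icc (0:ℝ) 1 → s • x ∈ K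

/-- Modified scaling vector field. -/
def Ltilde (η : E3 → ℝ) (w : ℝ → E3 → ℝ) : ℝ → E3 → ℝ :=
  fun t x => t * pdt w t x + η x * ∑ i : Fin 3, x i * pdx i w t x

/-- spatial derivative for functions of `x` only -/
def sd (i : Fin 3) (f : E3 → ℝ) : E3 → ℝ :=
  fun x => fderiv ℝ f x (EuclideanSpace.single i 1)

def rotS (i j : Fin 3) (f : E3 → ℝ) : E3 → ℝ := fun x => x i * sd j f x - x j * sd i f x

def iterOpS {m : ℕ} (F : Fin m → (E3 → ℝ) → E3 → ℝ) :
    ∀ {n : ℕ}, (Fin n → Fin m) → (E3 → ℝ) → E3 → ℝ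
  | 0, _, f => f
  | _ + 1, μ, f => F (μ 0) (iterOpS F (fun i => μ i.succ) f)

def sdW {n : ℕ} (μ : Fin n → Fin 3) : (E3 → ℝ) → E3 → ℝ := iterOpS sd μ

def zS (k : Fin 6) : (E3 → ℝ) → E3 → ℝ :=
  if k = 0 then rotS 0 1 else if k = 1 then rotS 0 2 else if k = 2 then rotS 1 2
  else if k = 3 then sd 0 else if k = 4 then sd 1 else sd 2

def zSW {n : ℕ} (μ : Fin n → Fin 6) : (E3 → ℝ) → E3 → ℝ := iterOpS zS μ

def zST (k : Fin 7) : (ℝ → E3 → ℝ) → ℝ → E3 → ℝ :=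
  if k = 0 then rot 0 1 else if k = 1 then rot 0 2 else if k = 2 then rot 1 2
  else if k = 3 then pd 0 else if k = 4 then pd 1 else if k = 5 then pd 2 else pd 3

def zSTW {n : ℕ} (μ : Fin n → Fin 7) : (ℝ → E3 → ℝ) → ℝ → E3 → ℝ := iterOp zST μ


section helpers

lemma pd_zero' : pd (0 : Fin 4) = pdt := rfl
lemma pd_one' : pd (1 : Fin 4) = pdx 0 := rfl
lemma pd_two' : pd (2 : Fin 4) = pdx 1 := rfl
lemma pd_three' : pd (3 : Fin 4) = pdx 2 := rfl

lemma jb_sq' (s : ℝ) : jb s ^ 2 = 1 + s ^ 2 := Real.sq_sqrt (by positivity)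
lemma jb_nonneg' (s : ℝ) : 0 ≤ jb s := Real.sqrt_nonneg _
lemma one_le_jb' (s : ℝ) : 1 ≤ jb s := by nlinarith [jb_sq' s, jb_nonneg' s]
lemma jb_pos' (s : ℝ) : 0 < jb s := lt_of_lt_of_le one_pos (one_le_jb' s)
lemma abs_le_jb' (s : ℝ) : |s| ≤ jb s := by
  nlinarith [jb_sq' s, jb_nonneg' s, abs_nonneg s, sq_abs s]
lemma jb_le_one_add' (s : ℝ) : jb s ≤ 1 + |s| := by
  nlinarith [jb_sq' s, jb_nonneg' s, abs_nonneg s, sq_abs s]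

lemma norm_sq_E3 (x : E3) : ‖x‖ ^ 2 = (x 0) ^ 2 + (x 1) ^ 2 + (x 2) ^ 2 := by
  rw [EuclideanSpace.norm_eq, Real.sq_sqrt (by positivity)]
  simp [Fin.sum_univ_three, Real.norm_eq_abs, sq_abs]

lemma abs_coord_le (x : E3) (i : Fin 3) : |x i| ≤ ‖x‖ := by
  have h := norm_sq_E3 x
  have hn := norm_nonneg x
  fin_cases i
  · show |x 0| ≤ ‖x‖
    nlinarith [abs_nonneg (x 0), sq_abs (x 0), sq_nonneg (x 1), sq_nonneg (x 2)]
  · show |x 1| ≤ ‖x‖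
    nlinarith [abs_nonneg (x 1), sq_abs (x 1), sq_nonneg (x 0), sq_nonneg (x 2)]
  · show |x 2| ≤ ‖x‖
    nlinarith [abs_nonneg (x 2), sq_abs (x 2), sq_nonneg (x 0), sq_nonneg (x 1)]

lemma aGrad_eq (f : ℝ → E3 → ℝ) (t : ℝ) (x : E3) :
    aGrad f t x = |pdt f t x| + |pdx 0 f t x| + |pdx 1 f t x| + |pdx 2 f t x| := by
  simp [aGrad, Fin.sum_univ_four, pd_zero', pd_one', pd_two', pd_three']

lemma aGam_eq (f : ℝ → E3 → ℝ) (t : ℝ) (x : E3) :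
    aGam f t x = |Lop f t x| + |rot 0 1 f t x| + |rot 0 2 f t x| + |rot 1 2 f t x|
      + |pdt f t x| + |pdx 0 f t x| + |pdx 1 f t x| + |pdx 2 f t x| := by
  have h : aGam f t x = |gam 0 f t x| + |gam 1 f t x| + |gam 2 f t x| + |gam 3 f t x|
      + |gam 4 f t x| + |gam 5 f t x| + |gam 6 f t x| + |gam 7 f t x| := by
    simp [aGam, Fin.sum_univ_eight]
  rw [h]; rfl

lemma Lop_eq (f : ℝ → E3 → ℝ) (t : ℝ) (x : E3) :
    Lop f t x = t * pdt f t x + (x 0 * pdx 0 f t x + x 1 * pdx 1 f t x + x 2 * pdx 2 f t x) := by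
  simp [Lop, Fin.sum_univ_three, add_assoc]

lemma aGrad_nonneg (f : ℝ → E3 → ℝ) (t : ℝ) (x : E3) : 0 ≤ aGrad f t x :=
  Finset.sum_nonneg fun _ _ => abs_nonneg _

lemma aGam_nonneg (f : ℝ → E3 → ℝ) (t : ℝ) (x : E3) : 0 ≤ aGam f t x :=
  Finset.sum_nonneg fun _ _ => abs_nonneg _

lemma pd_le_aGrad (f : ℝ → E3 → ℝ) (t : ℝ) (x : E3) (α : Fin 4) :
    |pd α f t x| ≤ aGrad f t x := by
  rw [aGrad_eq]
  have h0 := abs_nonneg (pdt f t x); have h1 := abs_nonneg (pdx 0 f t x)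
  have h2 := abs_nonneg (pdx 1 f t x); have h3 := abs_nonneg (pdx 2 f t x)
  fin_cases α
  · show |pdt f t x| ≤ _; linarith
  · show |pdx 0 f t x| ≤ _; linarith
  · show |pdx 1 f t x| ≤ _; linarith
  · show |pdx 2 f t x| ≤ _; linarith

lemma aGrad_le_aGam (f : ℝ → E3 → ℝ) (t : ℝ) (x : E3) : aGrad f t x ≤ aGam f t x := by
  rw [aGrad_eq, aGam_eq]
  have := abs_nonneg (Lop f t x); have := abs_nonneg (rot 0 1 f t x)
  have := abs_nonneg (rot 0 2 f t x); have := abs_nonneg (rot 1 2 f t x)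
  linarith

end helpers

section sums

lemma abs_sum3 (F : Fin 4 → Fin 4 → Fin 4 → ℝ) :
    |∑ α : Fin 4, ∑ β : Fin 4, ∑ γ : Fin 4, F α β γ| ≤
      ∑ α : Fin 4, ∑ β : Fin 4, ∑ γ : Fin 4, |F α β γ| := by
  refine (Finset.abs_sum_le_sum_abs _ _).trans (Finset.sum_le_sum fun α _ => ?_)
  refine (Finset.abs_sum_le_sum_abs _ _).trans (Finset.sum_le_sum fun β _ => ?_)
  exact Finset.abs_sum_le_sum_abs _ _

lemma null_sum (B : Fin 4 → Fin 4 → Fin 4 → ℝ) (N : Fin 4 → ℝ)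
    (hN : ∑ α : Fin 4, ∑ β : Fin 4, ∑ γ : Fin 4, B α β γ * N α * N β * N γ = 0)
    (la lb ld : ℝ) :
    ∑ α : Fin 4, ∑ β : Fin 4, ∑ γ : Fin 4,
      B α β γ * (la * N α) * (lb * N β) * (ld * N γ) = 0 := by
  have h : ∀ α β γ : Fin 4, B α β γ * (la * N α) * (lb * N β) * (ld * N γ)
      = la * lb * ld * (B α β γ * N α * N β * N γ) := by intros; ring
  simp_rw [h, ← Finset.mul_sum]
  rw [hN, mul_zero]

lemma tri_bound (B : Fin 4 → Fin 4 → Fin 4 → ℝ) (a b d ga gb gd : Fin 4 → ℝ)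
    (Pb Pd Ga Gb Gd La Lb : ℝ)
    (h0 : ∑ α : Fin 4, ∑ β : Fin 4, ∑ γ : Fin 4,
      B α β γ * (a α - ga α) * (b β - gb β) * (d γ - gd γ) = 0)
    (hPb : ∀ β, |b β| ≤ Pb) (hPd : ∀ γ, |d γ| ≤ Pd)
    (hGa : ∀ α, |ga α| ≤ Ga) (hGb : ∀ β, |gb β| ≤ Gb) (hGd : ∀ γ, |gd γ| ≤ Gd)
    (hLa : ∀ α, |a α - ga α| ≤ La) (hLb : ∀ β, |b β - gb β| ≤ Lb) :
    |∑ α : Fin 4, ∑ β : Fin 4, ∑ γ : Fin 4, B α β γ * a α * b β * d γ| ≤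
      (∑ α : Fin 4, ∑ β : Fin 4, ∑ γ : Fin 4, |B α β γ|) *
        (Ga * Pb * Pd + La * Gb * Pd + La * Lb * Gd) := by
  have hPb0 : 0 ≤ Pb := le_trans (abs_nonneg _) (hPb 0)
  have hPd0 : 0 ≤ Pd := le_trans (abs_nonneg _) (hPd 0)
  have hGa0 : 0 ≤ Ga := le_trans (abs_nonneg _) (hGa 0)
  have hGb0 : 0 ≤ Gb := le_trans (abs_nonneg _) (hGb 0)
  have hGd0 : 0 ≤ Gd := le_trans (abs_nonneg _) (hGd 0)
  have hLa0 : 0 ≤ La := le_trans (abs_nonneg _) (hLa 0)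
  have hLb0 : 0 ≤ Lb := le_trans (abs_nonneg _) (hLb 0)
  have key : ∀ α β γ : Fin 4,
      |B α β γ * a α * b β * d γ
        - B α β γ * (a α - ga α) * (b β - gb β) * (d γ - gd γ)|
        ≤ |B α β γ| * (Ga * Pb * Pd + La * Gb * Pd + La * Lb * Gd) := by
    intro α β γ
    have e : B α β γ * a α * b β * d γ
        - B α β γ * (a α - ga α) * (b β - gb β) * (d γ - gd γ)
        = B α β γ * ga α * b β * d γ + B α β γ * (a α - ga α) * gb β * d γ
          + B α β γ * (a α - ga α) * (b β - gb β) * gd γ := by ring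
    rw [e]
    have h1 : |B α β γ * ga α * b β * d γ| ≤ |B α β γ| * (Ga * Pb * Pd) := by
      rw [abs_mul, abs_mul, abs_mul]
      have h' : |ga α| * |b β| * |d γ| ≤ Ga * Pb * Pd :=
        mul_le_mul (mul_le_mul (hGa α) (hPb β) (abs_nonneg _) hGa0) (hPd γ) (abs_nonneg _)
          (by positivity)
      calc |B α β γ| * |ga α| * |b β| * |d γ|
          = |B α β γ| * (|ga α| * |b β| * |d γ|) := by ring
        _ ≤ |B α β γ| * (Ga * Pb * Pd) := mul_le_mul_of_nonneg_left h' (abs_nonneg _)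
    have h2 : |B α β γ * (a α - ga α) * gb β * d γ| ≤ |B α β γ| * (La * Gb * Pd) := by
      rw [abs_mul, abs_mul, abs_mul]
      have h' : |a α - ga α| * |gb β| * |d γ| ≤ La * Gb * Pd :=
        mul_le_mul (mul_le_mul (hLa α) (hGb β) (abs_nonneg _) hLa0) (hPd γ) (abs_nonneg _)
          (by positivity)
      calc |B α β γ| * |a α - ga α| * |gb β| * |d γ|
          = |B α β γ| * (|a α - ga α| * |gb β| * |d γ|) := by ring
        _ ≤ |B α β γ| * (La * Gb * Pd) := mul_le_mul_of_nonneg_left h' (abs_nonneg _)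
    have h3 : |B α β γ * (a α - ga α) * (b β - gb β) * gd γ|
        ≤ |B α β γ| * (La * Lb * Gd) := by
      rw [abs_mul, abs_mul, abs_mul]
      have h' : |a α - ga α| * |b β - gb β| * |gd γ| ≤ La * Lb * Gd :=
        mul_le_mul (mul_le_mul (hLa α) (hLb β) (abs_nonneg _) hLa0) (hGd γ) (abs_nonneg _)
          (by positivity)
      calc |B α β γ| * |a α - ga α| * |b β - gb β| * |gd γ|
          = |B α β γ| * (|a α - ga α| * |b β - gb β| * |gd γ|) := by ring
        _ ≤ |B α β γ| * (La * Lb * Gd) := mul_le_mul_of_nonneg_left h' (abs_nonneg _)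
    calc |B α β γ * ga α * b β * d γ + B α β γ * (a α - ga α) * gb β * d γ
          + B α β γ * (a α - ga α) * (b β - gb β) * gd γ|
        ≤ |B α β γ * ga α * b β * d γ| + |B α β γ * (a α - ga α) * gb β * d γ|
          + |B α β γ * (a α - ga α) * (b β - gb β) * gd γ| := abs_add_three _ _ _
      _ ≤ |B α β γ| * (Ga * Pb * Pd) + |B α β γ| * (La * Gb * Pd)
          + |B α β γ| * (La * Lb * Gd) := by linarith
      _ = |B α β γ| * (Ga * Pb * Pd + La * Gb * Pd + La * Lb * Gd) := by ring
  calc |∑ α : Fin 4, ∑ β : Fin 4, ∑ γ : Fin 4, B α β γ * a α * b β * d γ|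
      = |∑ α : Fin 4, ∑ β : Fin 4, ∑ γ : Fin 4, (B α β γ * a α * b β * d γ
          - B α β γ * (a α - ga α) * (b β - gb β) * (d γ - gd γ))| := by
        simp only [Finset.sum_sub_distrib]
        rw [h0, sub_zero]
    _ ≤ ∑ α : Fin 4, ∑ β : Fin 4, ∑ γ : Fin 4, |B α β γ * a α * b β * d γ
          - B α β γ * (a α - ga α) * (b β - gb β) * (d γ - gd γ)| := abs_sum3 _
    _ ≤ ∑ α : Fin 4, ∑ β : Fin 4, ∑ γ : Fin 4,
          |B α β γ| * (Ga * Pb * Pd + La * Gb * Pd + La * Lb * Gd) := by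
        refine Finset.sum_le_sum fun α _ => Finset.sum_le_sum fun β _ =>
          Finset.sum_le_sum fun γ _ => key α β γ
    _ = (∑ α : Fin 4, ∑ β : Fin 4, ∑ γ : Fin 4, |B α β γ|) *
          (Ga * Pb * Pd + La * Gb * Pd + La * Lb * Gd) := by
        simp only [Finset.sum_mul]

end sums

section scalar

lemma tang_bound (r S xi xj xk ai aj ak Rij Rik : ℝ) (hr : 0 < r)
    (hr2 : r ^ 2 = xi ^ 2 + xj ^ 2 + xk ^ 2) (hxj : |xj| ≤ r) (hxk : |xk| ≤ r)
    (hS : S = xi * ai + xj * aj + xk * ak)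
    (hRij : Rij = xi * aj - xj * ai) (hRik : Rik = xi * ak - xk * ai) :
    |ai - xi * S / r ^ 2| ≤ (|Rij| + |Rik|) / r := by
  have hr2pos : (0:ℝ) < r ^ 2 := pow_pos hr 2
  have e0 : ai * r ^ 2 - xi * S = xj * (-Rij) + xk * (-Rik) := by
    rw [hS, hRij, hRik]; linear_combination ai * hr2
  have e : ai - xi * S / r ^ 2 = (xj * (-Rij) + xk * (-Rik)) / r ^ 2 := by
    rw [← e0]; field_simp
  rw [e, abs_div, abs_of_pos hr2pos, div_le_div_iff₀ hr2pos hr]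
  have hnum : |xj * (-Rij) + xk * (-Rik)| ≤ |xj| * |Rij| + |xk| * |Rik| := by
    calc |xj * (-Rij) + xk * (-Rik)| ≤ |xj * (-Rij)| + |xk * (-Rik)| := abs_add_le _ _
      _ = |xj| * |Rij| + |xk| * |Rik| := by rw [abs_mul, abs_mul, abs_neg, abs_neg]
  nlinarith [abs_nonneg Rij, abs_nonneg Rik, abs_nonneg xj, abs_nonneg xk,
    mul_le_mul_of_nonneg_right hxj (abs_nonneg Rij),
    mul_le_mul_of_nonneg_right hxk (abs_nonneg Rik)]

lemma rad_bound (cc t r l a0 S P A : ℝ) (hcc : 0 < cc) (ht : 0 ≤ t) (hr : 1 ≤ r)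
    (hl : l = t * a0 + S) (hSP : |S| ≤ r * P) (ha0 : |a0| ≤ P)
    (hlA : |l| ≤ A) (hA0 : 0 ≤ A) :
    |S / r + a0 / cc| ≤ 4 * (1 + cc) / cc * (A + jb (cc * t - r) * P) / jb (t + r) := by
  have hr0 : 0 < r := lt_of_lt_of_le one_pos hr
  have hP0 : 0 ≤ P := le_trans (abs_nonneg _) ha0
  have hjbT := jb_pos' (t + r)
  have hjbK1 := one_le_jb' (cc * t - r)
  have hjbK := abs_le_jb' (cc * t - r)
  have hq : |S / r| ≤ P := by
    rw [abs_div, abs_of_pos hr0, div_le_iff₀ hr0]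
    calc |S| ≤ r * P := hSP
      _ = P * r := by ring
  have key : |a0 + cc * (S / r)| ≤ 4 * (1 + cc) * (A + jb (cc * t - r) * P) / jb (t + r) := by
    rcases le_or_gt (t + r) (2 * (1 + cc) * t) with hcase | hcase
    · have ht0 : 0 < t := by nlinarith
      have e : a0 + cc * (S / r) = (l + (cc * t - r) * (S / r)) / t := by
        rw [hl]; field_simp; ring
      rw [e, abs_div, abs_of_pos ht0, div_le_div_iff₀ ht0 hjbT]
      have h1 : |l + (cc * t - r) * (S / r)| ≤ A + jb (cc * t - r) * P := by
        calc |l + (cc * t - r) * (S / r)| ≤ |l| + |cc * t - r| * |S / r| := by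
              rw [← abs_mul]; exact abs_add_le _ _
          _ ≤ A + jb (cc * t - r) * P :=
              add_le_add hlA (mul_le_mul hjbK hq (abs_nonneg _) (jb_nonneg' _))
      have h2 : jb (t + r) ≤ 4 * (1 + cc) * t := by
        have h3 := jb_le_one_add' (t + r)
        rw [abs_of_nonneg (by linarith)] at h3
        nlinarith
      nlinarith [mul_le_mul h1 h2 (jb_nonneg' _) (by nlinarith : (0:ℝ) ≤ A + jb (cc*t-r)*P)]
    · have hjb2 : jb (t + r) ≤ 4 * jb (cc * t - r) := by
        have h1 := jb_le_one_add' (t + r)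
        rw [abs_of_nonneg (by linarith)] at h1
        have h3 : r - cc * t ≤ |cc * t - r| := by
          rw [abs_sub_comm]; exact le_trans (le_abs_self _) le_rfl
        nlinarith
      have htriv : |a0 + cc * (S / r)| ≤ (1 + cc) * P := by
        have hcs : |cc * (S / r)| = cc * |S / r| := by rw [abs_mul, abs_of_pos hcc]
        calc |a0 + cc * (S / r)| ≤ |a0| + |cc * (S / r)| := abs_add_le _ _
          _ = |a0| + cc * |S / r| := by rw [hcs]
          _ ≤ P + cc * P := by
              have := mul_le_mul_of_nonneg_left hq (le_of_lt hcc); linarith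
          _ = (1 + cc) * P := by ring
      rw [le_div_iff₀ hjbT]
      nlinarith [mul_le_mul htriv hjb2 (jb_nonneg' _) (by nlinarith : (0:ℝ) ≤ (1+cc)*P),
        mul_nonneg (jb_nonneg' (cc*t-r)) hP0]
    
  have e2 : S / r + a0 / cc = (a0 + cc * (S / r)) / cc := by field_simp; ring
  calc |S / r + a0 / cc| = |a0 + cc * (S / r)| / cc := by
        rw [e2, abs_div, abs_of_pos hcc]
    _ ≤ (4 * (1 + cc) * (A + jb (cc * t - r) * P) / jb (t + r)) / cc := by gcongr
    _ = 4 * (1 + cc) / cc * (A + jb (cc * t - r) * P) / jb (t + r) := by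
        ring

end scalar

section comp

lemma comp_bound (cc c0 rr a0 ai S P A R jT jK xi : ℝ)
    (hcc : 0 < cc) (hc0 : 0 < c0) (hr : 0 < rr)
    (hjT : 0 < jT) (hjK : 0 ≤ jK) (hA0 : 0 ≤ A) (hP0 : 0 ≤ P)
    (htang : |ai - xi * S / rr ^ 2| ≤ R / rr) (hR : R ≤ A)
    (hrad : |S / rr + a0 / cc| ≤ 4 * (1 + cc) / cc * (A + jK * P) / jT)
    (hxi : |xi| ≤ rr) (hjTr : jT ≤ (2 + 2 / c0) * rr) :
    |ai - -(a0) / cc * (xi / rr)| ≤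
      (2 * (2 + 2 / c0) + 4 * (1 + cc) / cc) * (A + jK * P) / jT := by
  have e1 : ai - -(a0) / cc * (xi / rr)
      = (ai - xi * S / rr ^ 2) + (xi / rr) * (S / rr + a0 / cc) := by
    field_simp; ring
  have hxir : |xi / rr| ≤ 1 := by
    rw [abs_div, abs_of_pos hr]; exact (div_le_one hr).mpr hxi
  have hT2 : |(xi / rr) * (S / rr + a0 / cc)| ≤ 4 * (1 + cc) / cc * (A + jK * P) / jT := by
    rw [abs_mul]
    calc |xi / rr| * |S / rr + a0 / cc|
        ≤ 1 * (4 * (1 + cc) / cc * (A + jK * P) / jT) :=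
          mul_le_mul hxir hrad (abs_nonneg _) one_pos.le
      _ = 4 * (1 + cc) / cc * (A + jK * P) / jT := one_mul _
  have hT1 : R / rr ≤ 2 * (2 + 2 / c0) * (A + jK * P) / jT := by
    rw [div_le_div_iff₀ hr hjT]
    have h1 : R * jT ≤ A * ((2 + 2 / c0) * rr) :=
      mul_le_mul hR hjTr hjT.le hA0
    have h2c0 : (0:ℝ) < 2 + 2 / c0 := by positivity
    nlinarith [mul_nonneg h2c0.le (mul_nonneg (mul_nonneg hjK hP0) hr.le),
      mul_nonneg h2c0.le (mul_nonneg hA0 hr.le)]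
  calc |ai - -(a0) / cc * (xi / rr)|
      ≤ |ai - xi * S / rr ^ 2| + |(xi / rr) * (S / rr + a0 / cc)| := by
        rw [e1]; exact abs_add_le _ _
    _ ≤ 2 * (2 + 2 / c0) * (A + jK * P) / jT + 4 * (1 + cc) / cc * (A + jK * P) / jT := by
        linarith
    _ = (2 * (2 + 2 / c0) + 4 * (1 + cc) / cc) * (A + jK * P) / jT := by ring

end comp

section perfun

set_option maxHeartbeats 2000000 in
lemma per_fun (cc c0 : ℝ) (hcc : 0 < cc) (hc0 : 0 < c0)
    (f : ℝ → E3 → ℝ) (t : ℝ) (x : E3)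
    (ht : 0 ≤ t) (hreg : c0 * t / 2 ≤ ‖x‖) (hr : 1 ≤ ‖x‖) (α : Fin 4) :
    |pd α f t x - -(pdt f t x) / cc * (![-cc, x 0 / ‖x‖, x 1 / ‖x‖, x 2 / ‖x‖] α)| ≤
      (2 * (2 + 2 / c0) + 4 * (1 + cc) / cc) *
        (aGam f t x + jb (cc * t - ‖x‖) * aGrad f t x) / jb (t + ‖x‖) ∧
    |(-(pdt f t x) / cc) * (![-cc, x 0 / ‖x‖, x 1 / ‖x‖, x 2 / ‖x‖] α)| ≤
      max 1 cc⁻¹ * aGrad f t x := by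
  have hr0 : (0:ℝ) < ‖x‖ := lt_of_lt_of_le one_pos hr
  have hr2 := norm_sq_E3 x
  have hPeq := aGrad_eq f t x
  have hAeq := aGam_eq f t x
  have hP0 := aGrad_nonneg f t x
  have hA0 := aGam_nonneg f t x
  have hjT := jb_pos' (t + ‖x‖)
  have hjK0 := jb_nonneg' (cc * t - ‖x‖)
  set S : ℝ := x 0 * pdx 0 f t x + x 1 * pdx 1 f t x + x 2 * pdx 2 f t x with hS
  -- basic abs bounds
  have habs0 := abs_nonneg (pdt f t x); have habs1 := abs_nonneg (pdx 0 f t x)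
  have habs2 := abs_nonneg (pdx 1 f t x); have habs3 := abs_nonneg (pdx 2 f t x)
  have habsL := abs_nonneg (Lop f t x)
  have habsR1 := abs_nonneg (rot 0 1 f t x); have habsR2 := abs_nonneg (rot 0 2 f t x)
  have habsR3 := abs_nonneg (rot 1 2 f t x)
  have ha0P : |pdt f t x| ≤ aGrad f t x := by rw [hPeq]; linarith
  have hlA : |Lop f t x| ≤ aGam f t x := by rw [hAeq]; linarith
  have hx0 := abs_coord_le x 0; have hx1 := abs_coord_le x 1; have hx2 := abs_coord_le x 2
  have hSP : |S| ≤ ‖x‖ * aGrad f t x := by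
    calc |S| ≤ |x 0 * pdx 0 f t x| + |x 1 * pdx 1 f t x| + |x 2 * pdx 2 f t x| :=
          abs_add_three _ _ _
      _ = |x 0| * |pdx 0 f t x| + |x 1| * |pdx 1 f t x| + |x 2| * |pdx 2 f t x| := by
          rw [abs_mul, abs_mul, abs_mul]
      _ ≤ ‖x‖ * |pdx 0 f t x| + ‖x‖ * |pdx 1 f t x| + ‖x‖ * |pdx 2 f t x| := by
          gcongr
      _ ≤ ‖x‖ * aGrad f t x := by rw [hPeq]; nlinarith
  have hl : Lop f t x = t * pdt f t x + S := by rw [Lop_eq, hS]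
  have hrad := rad_bound cc t ‖x‖ (Lop f t x) (pdt f t x) S (aGrad f t x) (aGam f t x)
    hcc ht hr hl hSP ha0P hlA hA0
  -- second-part helper
  have hmax : ∀ z : ℝ, |z| ≤ 1 →
      |(-(pdt f t x) / cc) * z| ≤ max 1 cc⁻¹ * aGrad f t x := by
    intro z hz
    have hinv : (0:ℝ) < cc⁻¹ := by positivity
    have e : |(-(pdt f t x) / cc) * z| = |pdt f t x| * cc⁻¹ * |z| := by
      rw [abs_mul, abs_div, abs_neg, abs_of_pos hcc, div_eq_mul_inv]
    rw [e]
    have h1 : |pdt f t x| * cc⁻¹ * |z| ≤ |pdt f t x| * cc⁻¹ * 1 := by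
      apply mul_le_mul_of_nonneg_left hz (by positivity)
    have h2 : |pdt f t x| * cc⁻¹ ≤ aGrad f t x * max 1 cc⁻¹ :=
      mul_le_mul ha0P (le_max_right 1 cc⁻¹) hinv.le hP0
    calc |pdt f t x| * cc⁻¹ * |z| ≤ |pdt f t x| * cc⁻¹ * 1 := h1
      _ = |pdt f t x| * cc⁻¹ := mul_one _
      _ ≤ aGrad f t x * max 1 cc⁻¹ := h2
      _ = max 1 cc⁻¹ * aGrad f t x := mul_comm _ _
  have hR1nonneg : 0 ≤ (2 * (2 + 2 / c0) + 4 * (1 + cc) / cc) *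
      (aGam f t x + jb (cc * t - ‖x‖) * aGrad f t x) / jb (t + ‖x‖) := by
    apply div_nonneg _ hjT.le
    apply mul_nonneg (by positivity)
    nlinarith [mul_nonneg hjK0 hP0]
  have hjTr : jb (t + ‖x‖) ≤ (2 + 2 / c0) * ‖x‖ := by
    have h1 : t ≤ 2 * ‖x‖ / c0 := by rw [le_div_iff₀ hc0]; linarith
    have h2 := jb_le_one_add' (t + ‖x‖)
    rw [abs_of_nonneg (by linarith)] at h2
    have e : (2 + 2 / c0) * ‖x‖ = 2 * ‖x‖ + 2 * ‖x‖ / c0 := by ring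
    linarith
  fin_cases α
  · constructor
    · show |pd 0 f t x - -(pdt f t x) / cc * (-cc)| ≤ _
      have e : pd 0 f t x - -(pdt f t x) / cc * (-cc) = 0 := by
        rw [pd_zero']; field_simp; ring
      rw [e, abs_zero]; exact hR1nonneg
    · show |(-(pdt f t x) / cc) * (-cc)| ≤ _
      have e : (-(pdt f t x) / cc) * (-cc) = pdt f t x := by field_simp
      rw [e]
      calc |pdt f t x| ≤ aGrad f t x := ha0P
        _ = 1 * aGrad f t x := (one_mul _).symm
        _ ≤ max 1 cc⁻¹ * aGrad f t x :=
            mul_le_mul_of_nonneg_right (le_max_left 1 cc⁻¹) hP0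
  · constructor
    · show |pd 1 f t x - -(pdt f t x) / cc * (x 0 / ‖x‖)| ≤ _
      rw [pd_one']
      have htang := tang_bound ‖x‖ S (x 0) (x 1) (x 2)
        (pdx 0 f t x) (pdx 1 f t x) (pdx 2 f t x)
        (rot 0 1 f t x) (rot 0 2 f t x) hr0 hr2 hx1 hx2 hS rfl rfl
      refine comp_bound cc c0 ‖x‖ (pdt f t x) (pdx 0 f t x) S (aGrad f t x) (aGam f t x)
        (|rot 0 1 f t x| + |rot 0 2 f t x|) (jb (t + ‖x‖)) (jb (cc * t - ‖x‖)) (x 0)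
        hcc hc0 hr0 hjT hjK0 hA0 hP0 htang ?_ hrad hx0 hjTr
      rw [hAeq]; linarith
    · show |(-(pdt f t x) / cc) * (x 0 / ‖x‖)| ≤ _
      refine hmax _ ?_
      rw [abs_div, abs_of_pos hr0]; exact (div_le_one hr0).mpr hx0
  · constructor
    · show |pd 2 f t x - -(pdt f t x) / cc * (x 1 / ‖x‖)| ≤ _
      rw [pd_two']
      have htang := tang_bound ‖x‖ S (x 1) (x 0) (x 2)
        (pdx 1 f t x) (pdx 0 f t x) (pdx 2 f t x)
        (x 1 * pdx 0 f t x - x 0 * pdx 1 f t x) (rot 1 2 f t x) hr0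
        (by rw [hr2]; ring) hx0 hx2 (by rw [hS]; ring) rfl rfl
      have hRrw : |x 1 * pdx 0 f t x - x 0 * pdx 1 f t x| = |rot 0 1 f t x| := by
        rw [show rot 0 1 f t x = x 0 * pdx 1 f t x - x 1 * pdx 0 f t x from rfl,
          abs_sub_comm]
      rw [hRrw] at htang
      refine comp_bound cc c0 ‖x‖ (pdt f t x) (pdx 1 f t x) S (aGrad f t x) (aGam f t x)
        (|rot 0 1 f t x| + |rot 1 2 f t x|) (jb (t + ‖x‖)) (jb (cc * t - ‖x‖)) (x 1)
        hcc hc0 hr0 hjT hjK0 hA0 hP0 htang ?_ hrad hx1 hjTr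
      rw [hAeq]; linarith
    · show |(-(pdt f t x) / cc) * (x 1 / ‖x‖)| ≤ _
      refine hmax _ ?_
      rw [abs_div, abs_of_pos hr0]; exact (div_le_one hr0).mpr hx1
  · constructor
    · show |pd 3 f t x - -(pdt f t x) / cc * (x 2 / ‖x‖)| ≤ _
      rw [pd_three']
      have htang := tang_bound ‖x‖ S (x 2) (x 0) (x 1)
        (pdx 2 f t x) (pdx 0 f t x) (pdx 1 f t x)
        (x 2 * pdx 0 f t x - x 0 * pdx 2 f t x) (x 2 * pdx 1 f t x - x 1 * pdx 2 f t x) hr0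
        (by rw [hr2]; ring) hx0 hx1 (by rw [hS]; ring) rfl rfl
      have hRrw1 : |x 2 * pdx 0 f t x - x 0 * pdx 2 f t x| = |rot 0 2 f t x| := by
        rw [show rot 0 2 f t x = x 0 * pdx 2 f t x - x 2 * pdx 0 f t x from rfl,
          abs_sub_comm]
      have hRrw2 : |x 2 * pdx 1 f t x - x 1 * pdx 2 f t x| = |rot 1 2 f t x| := by
        rw [show rot 1 2 f t x = x 1 * pdx 2 f t x - x 2 * pdx 1 f t x from rfl,
          abs_sub_comm]
      rw [hRrw1, hRrw2] at htang
      refine comp_bound cc c0 ‖x‖ (pdt f t x) (pdx 2 f t x) S (aGrad f t x) (aGam f t x)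
        (|rot 0 2 f t x| + |rot 1 2 f t x|) (jb (t + ‖x‖)) (jb (cc * t - ‖x‖)) (x 2)
        hcc hc0 hr0 hjT hjK0 hA0 hP0 htang ?_ hrad hx2 hjTr
      rw [hAeq]; linarith
    · show |(-(pdt f t x) / cc) * (x 2 / ‖x‖)| ≤ _
      refine hmax _ ?_
      rw [abs_div, abs_of_pos hr0]; exact (div_le_one hr0).mpr hx2

end perfun

set_option maxHeartbeats 8000000

/-- null form estimate for `B^{αβ}_γ ∂_α u ∂_β v ∂_γ w`. -/
theorem stmt_7 :
    ∀ (D : ℕ) (c : Fin D → ℝ),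
      (∀ i j : Fin D, i < j → c j < c i) → (∀ i, 0 < c i) →
    ∀ (B : Fin 4 → Fin 4 → Fin 4 → ℝ) (K : Fin D),
      (∀ ξ : Fin 4 → ℝ,
        (ξ 0) ^ 2 / (c K) ^ 2 - (ξ 1) ^ 2 - (ξ 2) ^ 2 - (ξ 3) ^ 2 = 0 →
        (∑ α : Fin 4, ∑ β : Fin 4, ∑ γ : Fin 4, B α β γ * ξ α * ξ β * ξ γ) = 0) →
    ∀ c0 : ℝ, ((∀ I : Fin D, c0 ≤ c I / 2) ∧ ∃ I : Fin D, c0 = c I / 2) →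
    ∃ C : ℝ, 0 < C ∧
      ∀ (u v w : ℝ → E3 → ℝ) (U : Set (ℝ × E3)), IsOpen U →
        {p : ℝ × E3 | 0 ≤ p.1 ∧ c0 * p.1 / 2 ≤ ‖p.2‖} ⊆ U →
        ContDiffOn ℝ (⊤ : ℕ∞) (fun p : ℝ × E3 => u p.1 p.2) U →
        ContDiffOn ℝ (⊤ : ℕ∞) (fun p : ℝ × E3 => v p.1 p.2) U →
        ContDiffOn ℝ (⊤ : ℕ∞) (fun p : ℝ × E3 => w p.1 p.2) U →
        ∀ (t : ℝ) (x : E3), 0 ≤ t → c0 * t / 2 ≤ ‖x‖ →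
          |∑ α : Fin 4, ∑ β : Fin 4, ∑ γ : Fin 4,
              B α β γ * pd α u t x * pd β v t x * pd γ w t x| ≤
            C * (jb (t + ‖x‖))⁻¹ *
              (aGam u t x * aGrad v t x * aGrad w t x
                + aGrad u t x * aGam v t x * aGrad w t x
                + aGrad u t x * aGrad v t x * aGam w t x
                + jb (c K * t - ‖x‖) * aGrad u t x * aGrad v t x * aGrad w t x) := by
  intro D c hdec hpos B K hnull c0 hc0
  obtain ⟨hc0le, J, hc0eq⟩ := hc0
  have hcc : 0 < c K := hpos K
  have hc0pos : 0 < c0 := by rw [hc0eq]; exact half_pos (hpos J)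
  set cc := c K with hccdef
  set M := ∑ α : Fin 4, ∑ β : Fin 4, ∑ γ : Fin 4, |B α β γ| with hMdef
  have hM0 : 0 ≤ M := Finset.sum_nonneg fun _ _ => Finset.sum_nonneg fun _ _ =>
    Finset.sum_nonneg fun _ _ => abs_nonneg _
  set C1 := 2 * (2 + 2 / c0) + 4 * (1 + cc) / cc with hC1def
  have hC10 : 0 < C1 := by rw [hC1def]; positivity
  set K0 := max 1 cc⁻¹ with hK0def
  have hK01 : (1:ℝ) ≤ K0 := le_max_left _ _
  have hK00 : (0:ℝ) ≤ K0 := by linarith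
  have h2c0 : (0:ℝ) < 2 + 2 / c0 := by positivity
  clear_value cc M C1 K0
  have hCpos : 0 < 2 * (M + 1) * (C1 + 1) * (K0 + 1) ^ 2 * (2 + 2 / c0) * 3 := by
    have h1 : (0:ℝ) < M + 1 := by linarith
    have h2 : (0:ℝ) < C1 + 1 := by linarith
    have h3 : (0:ℝ) < (K0 + 1) ^ 2 := pow_pos (by linarith) 2
    have := mul_pos (mul_pos (mul_pos (mul_pos (mul_pos two_pos h1) h2) h3) h2c0)
      (by norm_num : (0:ℝ) < 3)
    linarith
  refine ⟨2 * (M + 1) * (C1 + 1) * (K0 + 1) ^ 2 * (2 + 2 / c0) * 3, hCpos, ?_⟩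
  intro u v w U hU hsub hcu hcv hcw t x ht hreg
  have hjT := jb_pos' (t + ‖x‖)
  have hjK0 := jb_nonneg' (cc * t - ‖x‖)
  have hjK1 := one_le_jb' (cc * t - ‖x‖)
  have hPu0 := aGrad_nonneg u t x; have hPv0 := aGrad_nonneg v t x
  have hPw0 := aGrad_nonneg w t x
  have hAu0 := aGam_nonneg u t x; have hAv0 := aGam_nonneg v t x
  have hAw0 := aGam_nonneg w t x
  have hRHS40 : 0 ≤ aGam u t x * aGrad v t x * aGrad w t x
      + aGrad u t x * aGam v t x * aGrad w t x
      + aGrad u t x * aGrad v t x * aGam w t x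
      + jb (cc * t - ‖x‖) * aGrad u t x * aGrad v t x * aGrad w t x := by
    have n1 : 0 ≤ aGam u t x * aGrad v t x * aGrad w t x :=
      mul_nonneg (mul_nonneg hAu0 hPv0) hPw0
    have n2 : 0 ≤ aGrad u t x * aGam v t x * aGrad w t x :=
      mul_nonneg (mul_nonneg hPu0 hAv0) hPw0
    have n3 : 0 ≤ aGrad u t x * aGrad v t x * aGam w t x :=
      mul_nonneg (mul_nonneg hPu0 hPv0) hAw0
    have n4 : 0 ≤ jb (cc * t - ‖x‖) * aGrad u t x * aGrad v t x * aGrad w t x :=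
      mul_nonneg (mul_nonneg (mul_nonneg hjK0 hPu0) hPv0) hPw0
    linarith
  by_cases hr : 1 ≤ ‖x‖
  · -- main case
    have hr0 : (0:ℝ) < ‖x‖ := lt_of_lt_of_le one_pos hr
    set N : Fin 4 → ℝ := ![-cc, x 0 / ‖x‖, x 1 / ‖x‖, x 2 / ‖x‖] with hNdef
    have hNnull : ∑ α : Fin 4, ∑ β : Fin 4, ∑ γ : Fin 4, B α β γ * N α * N β * N γ = 0 := by
      apply hnull
      show (-cc) ^ 2 / cc ^ 2 - (x 0 / ‖x‖) ^ 2 - (x 1 / ‖x‖) ^ 2 - (x 2 / ‖x‖) ^ 2 = 0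
      have hx2 := norm_sq_E3 x
      have hne : ‖x‖ ≠ 0 := ne_of_gt hr0
      have hcne : cc ≠ 0 := ne_of_gt hcc
      field_simp
      linear_combination hx2
    have hu := fun α => per_fun cc c0 hcc hc0pos u t x ht hreg hr α
    have hv := fun α => per_fun cc c0 hcc hc0pos v t x ht hreg hr α
    have hw := fun α => per_fun cc c0 hcc hc0pos w t x ht hreg hr α
    have h0 : ∑ α : Fin 4, ∑ β : Fin 4, ∑ γ : Fin 4,
        B α β γ * ((fun α => pd α u t x) α - (fun α => pd α u t x - -(pdt u t x) / cc * N α) α)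
          * ((fun β => pd β v t x) β - (fun β => pd β v t x - -(pdt v t x) / cc * N β) β)
          * ((fun γ => pd γ w t x) γ - (fun γ => pd γ w t x - -(pdt w t x) / cc * N γ) γ) = 0 := by
      simp only [sub_sub_cancel]
      exact null_sum B N hNnull _ _ _
    have htri := tri_bound B
      (fun α => pd α u t x) (fun β => pd β v t x) (fun γ => pd γ w t x)
      (fun α => pd α u t x - -(pdt u t x) / cc * N α)
      (fun β => pd β v t x - -(pdt v t x) / cc * N β)
      (fun γ => pd γ w t x - -(pdt w t x) / cc * N γ)
      (aGrad v t x) (aGrad w t x)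
      (C1 * (aGam u t x + jb (cc * t - ‖x‖) * aGrad u t x) / jb (t + ‖x‖))
      (C1 * (aGam v t x + jb (cc * t - ‖x‖) * aGrad v t x) / jb (t + ‖x‖))
      (C1 * (aGam w t x + jb (cc * t - ‖x‖) * aGrad w t x) / jb (t + ‖x‖))
      (K0 * aGrad u t x) (K0 * aGrad v t x)
      h0
      (fun β => pd_le_aGrad v t x β) (fun γ => pd_le_aGrad w t x γ)
      (fun α => by rw [hC1def]; exact (hu α).1)
      (fun β => by rw [hC1def]; exact (hv β).1)
      (fun γ => by rw [hC1def]; exact (hw γ).1)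
      (fun α => by rw [hK0def]; simpa only [sub_sub_cancel] using (hu α).2)
      (fun β => by rw [hK0def]; simpa only [sub_sub_cancel] using (hv β).2)
    rw [← hMdef] at htri
    -- core inequality
    have d1 : (aGam u t x + jb (cc * t - ‖x‖) * aGrad u t x) * aGrad v t x * aGrad w t x
        ≤ aGam u t x * aGrad v t x * aGrad w t x
          + aGrad u t x * aGam v t x * aGrad w t x
          + aGrad u t x * aGrad v t x * aGam w t x
          + jb (cc * t - ‖x‖) * aGrad u t x * aGrad v t x * aGrad w t x := by
      nlinarith [mul_nonneg (mul_nonneg hPu0 hAv0) hPw0,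
        mul_nonneg (mul_nonneg hPu0 hPv0) hAw0]
    have d2 : aGrad u t x * (aGam v t x + jb (cc * t - ‖x‖) * aGrad v t x) * aGrad w t x
        ≤ aGam u t x * aGrad v t x * aGrad w t x
          + aGrad u t x * aGam v t x * aGrad w t x
          + aGrad u t x * aGrad v t x * aGam w t x
          + jb (cc * t - ‖x‖) * aGrad u t x * aGrad v t x * aGrad w t x := by
      nlinarith [mul_nonneg (mul_nonneg hAu0 hPv0) hPw0,
        mul_nonneg (mul_nonneg hPu0 hPv0) hAw0]
    have d3 : aGrad u t x * aGrad v t x * (aGam w t x + jb (cc * t - ‖x‖) * aGrad w t x)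
        ≤ aGam u t x * aGrad v t x * aGrad w t x
          + aGrad u t x * aGam v t x * aGrad w t x
          + aGrad u t x * aGrad v t x * aGam w t x
          + jb (cc * t - ‖x‖) * aGrad u t x * aGrad v t x * aGrad w t x := by
      nlinarith [mul_nonneg (mul_nonneg hAu0 hPv0) hPw0,
        mul_nonneg (mul_nonneg hPu0 hAv0) hPw0]
    have m1 := mul_le_mul_of_nonneg_left d1 (mul_nonneg hM0 hC10.le)
    have m2 := mul_le_mul_of_nonneg_left d2
      (mul_nonneg (mul_nonneg hM0 hC10.le) hK00)
    have m3 := mul_le_mul_of_nonneg_left d3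
      (mul_nonneg (mul_nonneg hM0 hC10.le) (mul_nonneg hK00 hK00))
    have hcoef : M * C1 + M * C1 * K0 + M * C1 * (K0 * K0)
        ≤ 2 * (M + 1) * (C1 + 1) * (K0 + 1) ^ 2 * (2 + 2 / c0) * 3 := by
      have e1 : M * C1 ≤ (M + 1) * (C1 + 1) := by nlinarith
      have e2 : 1 + K0 + K0 * K0 ≤ (K0 + 1) ^ 2 := by nlinarith
      have e3 : M * C1 * (1 + K0 + K0 * K0) ≤ (M + 1) * (C1 + 1) * ((K0 + 1) ^ 2) :=
        mul_le_mul e1 e2 (by nlinarith) (by nlinarith)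
      have hZ0 : (0:ℝ) ≤ (M + 1) * (C1 + 1) * ((K0 + 1) ^ 2) :=
        mul_nonneg (mul_nonneg (by linarith) (by linarith)) (by positivity)
      have h2c0' : (2:ℝ) ≤ 2 + 2 / c0 := by
        have : (0:ℝ) < 2 / c0 := by positivity
        linarith
      have h4 : (M + 1) * (C1 + 1) * ((K0 + 1) ^ 2) * 2
          ≤ (M + 1) * (C1 + 1) * ((K0 + 1) ^ 2) * (2 + 2 / c0) :=
        mul_le_mul_of_nonneg_left h2c0' hZ0
      nlinarith [e3, hZ0, h4]
    have hcore : M * C1 *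
          ((aGam u t x + jb (cc * t - ‖x‖) * aGrad u t x) * aGrad v t x * aGrad w t x)
        + M * C1 * K0 *
          (aGrad u t x * (aGam v t x + jb (cc * t - ‖x‖) * aGrad v t x) * aGrad w t x)
        + M * C1 * (K0 * K0) *
          (aGrad u t x * aGrad v t x * (aGam w t x + jb (cc * t - ‖x‖) * aGrad w t x))
        ≤ 2 * (M + 1) * (C1 + 1) * (K0 + 1) ^ 2 * (2 + 2 / c0) * 3 *
          (aGam u t x * aGrad v t x * aGrad w t x
            + aGrad u t x * aGam v t x * aGrad w t x
            + aGrad u t x * aGrad v t x * aGam w t x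
            + jb (cc * t - ‖x‖) * aGrad u t x * aGrad v t x * aGrad w t x) := by
      nlinarith [m1, m2, m3, mul_le_mul_of_nonneg_right hcoef hRHS40]
    calc |∑ α : Fin 4, ∑ β : Fin 4, ∑ γ : Fin 4,
          B α β γ * pd α u t x * pd β v t x * pd γ w t x|
        ≤ M * (C1 * (aGam u t x + jb (cc * t - ‖x‖) * aGrad u t x) / jb (t + ‖x‖)
              * aGrad v t x * aGrad w t x
            + K0 * aGrad u t x
              * (C1 * (aGam v t x + jb (cc * t - ‖x‖) * aGrad v t x) / jb (t + ‖x‖))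
              * aGrad w t x
            + K0 * aGrad u t x * (K0 * aGrad v t x)
              * (C1 * (aGam w t x + jb (cc * t - ‖x‖) * aGrad w t x) / jb (t + ‖x‖))) :=
          htri
      _ = (M * C1 *
            ((aGam u t x + jb (cc * t - ‖x‖) * aGrad u t x) * aGrad v t x * aGrad w t x)
          + M * C1 * K0 *
            (aGrad u t x * (aGam v t x + jb (cc * t - ‖x‖) * aGrad v t x) * aGrad w t x)
          + M * C1 * (K0 * K0) *
            (aGrad u t x * aGrad v t x * (aGam w t x + jb (cc * t - ‖x‖) * aGrad w t x)))
            * (jb (t + ‖x‖))⁻¹ := by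
          field_simp
      _ ≤ (2 * (M + 1) * (C1 + 1) * (K0 + 1) ^ 2 * (2 + 2 / c0) * 3 *
            (aGam u t x * aGrad v t x * aGrad w t x
              + aGrad u t x * aGam v t x * aGrad w t x
              + aGrad u t x * aGrad v t x * aGam w t x
              + jb (cc * t - ‖x‖) * aGrad u t x * aGrad v t x * aGrad w t x))
            * (jb (t + ‖x‖))⁻¹ :=
          mul_le_mul_of_nonneg_right hcore (inv_nonneg.mpr hjT.le)
      _ = 2 * (M + 1) * (C1 + 1) * (K0 + 1) ^ 2 * (2 + 2 / c0) * 3 * (jb (t + ‖x‖))⁻¹ *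
            (aGam u t x * aGrad v t x * aGrad w t x
              + aGrad u t x * aGam v t x * aGrad w t x
              + aGrad u t x * aGrad v t x * aGam w t x
              + jb (cc * t - ‖x‖) * aGrad u t x * aGrad v t x * aGrad w t x) := by
          ring
  · -- trivial case : ‖x‖ < 1
    push_neg at hr
    have h0 : ∑ α : Fin 4, ∑ β : Fin 4, ∑ γ : Fin 4,
        B α β γ * ((fun α => pd α u t x) α - (fun α => pd α u t x) α)
          * ((fun β => pd β v t x) β - (fun β => pd β v t x) β)
          * ((fun γ => pd γ w t x) γ - (fun γ => pd γ w t x) γ) = 0 := by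
      simp only [sub_self, mul_zero, zero_mul, Finset.sum_const_zero]
    have htri := tri_bound B
      (fun α => pd α u t x) (fun β => pd β v t x) (fun γ => pd γ w t x)
      (fun α => pd α u t x) (fun β => pd β v t x) (fun γ => pd γ w t x)
      (aGrad v t x) (aGrad w t x)
      (aGrad u t x) (aGrad v t x) (aGrad w t x) 0 0
      h0
      (fun β => pd_le_aGrad v t x β) (fun γ => pd_le_aGrad w t x γ)
      (fun α => pd_le_aGrad u t x α) (fun β => pd_le_aGrad v t x β)
      (fun γ => pd_le_aGrad w t x γ)
      (fun α => by simp only [sub_self, abs_zero]; exact le_refl 0)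
      (fun β => by simp only [sub_self, abs_zero]; exact le_refl 0)
    rw [← hMdef] at htri
    have hjTle : jb (t + ‖x‖) ≤ 2 + 2 / c0 := by
      have h1 : t ≤ 2 / c0 := by
        rw [le_div_iff₀ hc0pos]
        nlinarith [norm_nonneg x]
      have h2 := jb_le_one_add' (t + ‖x‖)
      rw [abs_of_nonneg (by positivity)] at h2
      linarith
    have hPPP0 : 0 ≤ aGrad u t x * aGrad v t x * aGrad w t x :=
      mul_nonneg (mul_nonneg hPu0 hPv0) hPw0
    have hstep1 : M * (aGrad u t x * aGrad v t x * aGrad w t x)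
        ≤ (2 * (M + 1) * (C1 + 1) * (K0 + 1) ^ 2 * (2 + 2 / c0) * 3) * (2 + 2 / c0)⁻¹
          * (aGrad u t x * aGrad v t x * aGrad w t x) := by
      apply mul_le_mul_of_nonneg_right _ hPPP0
      have e : (2 * (M + 1) * (C1 + 1) * (K0 + 1) ^ 2 * (2 + 2 / c0) * 3) * (2 + 2 / c0)⁻¹
          = 2 * (M + 1) * (C1 + 1) * (K0 + 1) ^ 2 * 3 := by
        field_simp
      rw [e]
      have e1 : (1:ℝ) ≤ C1 + 1 := by linarith
      have e2 : (1:ℝ) ≤ (K0 + 1) ^ 2 := by nlinarith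
      nlinarith [mul_le_mul e1 e2 (by norm_num) (by linarith),
        mul_nonneg (by linarith : (0:ℝ) ≤ M + 1)
          (mul_nonneg (by linarith : (0:ℝ) ≤ C1 + 1) (by positivity : (0:ℝ) ≤ (K0+1)^2))]
    have hinv : (2 + 2 / c0)⁻¹ ≤ (jb (t + ‖x‖))⁻¹ := by
      apply inv_anti₀ hjT hjTle
    have hstep2 : (2 * (M + 1) * (C1 + 1) * (K0 + 1) ^ 2 * (2 + 2 / c0) * 3) * (2 + 2 / c0)⁻¹
          * (aGrad u t x * aGrad v t x * aGrad w t x)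
        ≤ (2 * (M + 1) * (C1 + 1) * (K0 + 1) ^ 2 * (2 + 2 / c0) * 3) * (jb (t + ‖x‖))⁻¹
          * (aGrad u t x * aGrad v t x * aGrad w t x) := by
      apply mul_le_mul_of_nonneg_right _ hPPP0
      exact mul_le_mul_of_nonneg_left hinv hCpos.le
    have hstep3 : (2 * (M + 1) * (C1 + 1) * (K0 + 1) ^ 2 * (2 + 2 / c0) * 3) * (jb (t + ‖x‖))⁻¹
          * (aGrad u t x * aGrad v t x * aGrad w t x)
        ≤ (2 * (M + 1) * (C1 + 1) * (K0 + 1) ^ 2 * (2 + 2 / c0) * 3) * (jb (t + ‖x‖))⁻¹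
          * (aGam u t x * aGrad v t x * aGrad w t x
            + aGrad u t x * aGam v t x * aGrad w t x
            + aGrad u t x * aGrad v t x * aGam w t x
            + jb (cc * t - ‖x‖) * aGrad u t x * aGrad v t x * aGrad w t x) := by
      apply mul_le_mul_of_nonneg_left _ (mul_nonneg hCpos.le (inv_nonneg.mpr hjT.le))
      nlinarith [mul_nonneg (mul_nonneg hAu0 hPv0) hPw0,
        mul_nonneg (mul_nonneg hPu0 hAv0) hPw0,
        mul_nonneg (mul_nonneg hPu0 hPv0) hAw0,
        mul_nonneg (mul_nonneg hPu0 hPv0) hPw0]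
    calc |∑ α : Fin 4, ∑ β : Fin 4, ∑ γ : Fin 4,
          B α β γ * pd α u t x * pd β v t x * pd γ w t x|
        ≤ M * (aGrad u t x * aGrad v t x * aGrad w t x
            + 0 * aGrad v t x * aGrad w t x + 0 * 0 * aGrad w t x) := htri
      _ = M * (aGrad u t x * aGrad v t x * aGrad w t x) := by ring
      _ ≤ _ := le_trans hstep1 (le_trans hstep2 hstep3)
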